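/- Let T < 0 be a real number and let n ≥ 25 be an integer. Define c_q = ∫_0^∞ (1+(t−T)²)^{(5+2q−n)/2} dt for q = 0, 1, 2. Then (n−10)(n−7)/(n−8)² ≤ c₁² / (c₀ c₂) ≤ (n−6)(n−10) / ((n−8)(n−9)). -/

import Mathlib

open MeasureTheory Set Filter Real Topology

lemma cq_integrable (T : ℝ) {β : ℝ} (hβ : β ≤ -1) :
    IntegrableOn (fun t : ℝ => (1 + (t - T) ^ 2) ^ β) (Set.Ioi 0) := by
  have hbase : Integrable (fun t : ℝ => (1 + (t - T) ^ 2)⁻¹) :=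
    Integrable.comp_sub_right integrable_inv_one_add_sq T
  have hcont : Continuous fun t : ℝ => (1 + (t - T) ^ 2) ^ β := by
    apply Continuous.rpow_const (by continuity)
    intro t
    left
    nlinarith [sq_nonneg (t - T)]
  refine Integrable.mono' hbase.integrableOn hcont.aestronglyMeasurable.restrict ?_
  filter_upwards [] with t
  have hb : (1 : ℝ) ≤ 1 + (t - T) ^ 2 := by nlinarith [sq_nonneg (t - T)]
  rw [Real.norm_eq_abs, abs_of_nonneg (Real.rpow_nonneg (by linarith) _)]
  calc (1 + (t - T) ^ 2) ^ β ≤ (1 + (t - T) ^ 2) ^ (-1 : ℝ) :=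
        Real.rpow_le_rpow_of_exponent_le hb (by linarith)
    _ = (1 + (t - T) ^ 2)⁻¹ := Real.rpow_neg_one _

lemma cq_pos (T : ℝ) {β : ℝ} (hβ : β ≤ -1) :
    0 < ∫ t in Set.Ioi (0 : ℝ), (1 + (t - T) ^ 2) ^ β := by
  have hnn : 0 ≤ᵐ[volume.restrict (Set.Ioi (0:ℝ))] fun t : ℝ => (1 + (t - T) ^ 2) ^ β := by
    filter_upwards [] with t
    positivity
  rw [setIntegral_pos_iff_support_of_nonneg_ae hnn (cq_integrable T hβ)]
  have hsupp : (Function.support fun t : ℝ => (1 + (t - T) ^ 2) ^ β) = Set.univ := by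
    ext t
    simp only [Function.mem_support, Set.mem_univ, iff_true]
    positivity
  rw [hsupp, Set.univ_inter, Real.volume_Ioi]
  exact ENNReal.zero_lt_top

lemma cq_ibp (T : ℝ) (hT : T < 0) {β : ℝ} (hβ : β ≤ -1) :
    (1 + 2 * β) * (∫ t in Set.Ioi (0 : ℝ), (1 + (t - T) ^ 2) ^ β)
      - 2 * β * (∫ t in Set.Ioi (0 : ℝ), (1 + (t - T) ^ 2) ^ (β - 1))
      = T * (1 + T ^ 2) ^ β := by
  set f : ℝ → ℝ := fun t => (t - T) * (1 + (t - T) ^ 2) ^ β with hf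
  set f' : ℝ → ℝ := fun t =>
    (1 + 2 * β) * (1 + (t - T) ^ 2) ^ β - 2 * β * (1 + (t - T) ^ 2) ^ (β - 1) with hf'
  have hbpos : ∀ t : ℝ, (0:ℝ) < 1 + (t - T) ^ 2 := fun t => by nlinarith [sq_nonneg (t - T)]
  have hderiv : ∀ t : ℝ, HasDerivAt f (f' t) t := by
    intro t
    have h1 : HasDerivAt (fun s : ℝ => 1 + (s - T) ^ 2) (2 * (t - T)) t := by
      have := (((hasDerivAt_id t).sub_const T).pow 2).const_add 1
      simpa using this
    have h2 : HasDerivAt (fun s : ℝ => (1 + (s - T) ^ 2) ^ β)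
        (2 * (t - T) * β * (1 + (t - T) ^ 2) ^ (β - 1)) t :=
      h1.rpow_const (Or.inl (hbpos t).ne')
    have h3 := ((hasDerivAt_id t).sub_const T).mul h2
    have key : (1 + (t - T) ^ 2) ^ β = (1 + (t - T) ^ 2) ^ (β - 1) * (1 + (t - T) ^ 2) := by
      rw [← Real.rpow_add_one (hbpos t).ne' (β - 1)]
      norm_num
    refine HasDerivAt.congr_deriv h3 ?_
    simp only [hf', id_eq]
    rw [key]
    ring
  have htend : Tendsto f atTop (𝓝 0) := by
    have h1 : Tendsto (fun t : ℝ => (t - T) ^ (-(-(1 + 2 * β)))) atTop (𝓝 0) := by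
      have htop : Tendsto (fun t : ℝ => t - T) atTop atTop :=
        tendsto_atTop_add_const_right atTop (-T) tendsto_id
      exact (tendsto_rpow_neg_atTop (by linarith : (0:ℝ) < -(1 + 2 * β))).comp htop
    have h1' : Tendsto (fun t : ℝ => (t - T) ^ (1 + 2 * β)) atTop (𝓝 0) := by
      simpa [neg_neg] using h1
    apply tendsto_of_tendsto_of_tendsto_of_le_of_le' tendsto_const_nhds h1'
    · filter_upwards [eventually_ge_atTop (1 + T)] with t ht
      have hy : (0:ℝ) < t - T := by linarith
      positivity
    · filter_upwards [eventually_ge_atTop (1 + T)] with t ht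
      have hy : (1:ℝ) ≤ t - T := by linarith
      have hy0 : (0:ℝ) < t - T := by linarith
      have hle : (1 + (t - T) ^ 2) ^ β ≤ ((t - T) ^ 2) ^ β := by
        apply Real.rpow_le_rpow_of_nonpos (by positivity) (by nlinarith) (by linarith)
      have heq : (t - T) * ((t - T) ^ 2) ^ β = (t - T) ^ (1 + 2 * β) := by
        rw [← Real.rpow_natCast (t - T) 2, ← Real.rpow_mul hy0.le,
          Real.rpow_add hy0, Real.rpow_one]
        norm_num
      calc f t ≤ (t - T) * ((t - T) ^ 2) ^ β := by
            apply mul_le_mul_of_nonneg_left hle hy0.le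
        _ = (t - T) ^ (1 + 2 * β) := heq
  have hint : IntegrableOn f' (Set.Ioi (0:ℝ)) volume := by
    apply Integrable.sub
    · exact (cq_integrable T hβ).const_mul _
    · exact (cq_integrable T (by linarith : β - 1 ≤ -1)).const_mul _
  have hcont : ContinuousWithinAt f (Set.Ici 0) 0 :=
    (hderiv 0).continuousAt.continuousWithinAt
  have hftc := integral_Ioi_of_hasDerivAt_of_tendsto hcont (fun t _ => hderiv t) hint htend
  have hsplit : ∫ t in Set.Ioi (0:ℝ), f' t
      = (1 + 2 * β) * (∫ t in Set.Ioi (0 : ℝ), (1 + (t - T) ^ 2) ^ β)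
        - 2 * β * (∫ t in Set.Ioi (0 : ℝ), (1 + (t - T) ^ 2) ^ (β - 1)) := by
    simp only [hf']
    rw [integral_sub ((cq_integrable T hβ).const_mul _)
      ((cq_integrable T (by linarith : β - 1 ≤ -1)).const_mul _),
      integral_const_mul, integral_const_mul]
  rw [hsplit] at hftc
  rw [hftc]
  simp only [hf]
  have : ((0:ℝ) - T) ^ 2 = T ^ 2 := by ring
  rw [this]
  ring

lemma cq_compare (T : ℝ) (hT : T < 0) {β : ℝ} (hβ : β ≤ -1) :
    (∫ t in Set.Ioi (0 : ℝ), (1 + (t - T) ^ 2) ^ (β - 1)) * (1 + T ^ 2)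
      ≤ ∫ t in Set.Ioi (0 : ℝ), (1 + (t - T) ^ 2) ^ β := by
  rw [← integral_mul_const]
  apply setIntegral_mono_on ((cq_integrable T (by linarith : β - 1 ≤ -1)).mul_const _)
    (cq_integrable T hβ) measurableSet_Ioi
  intro t ht
  simp only [Set.mem_Ioi] at ht
  have hbpos : (0:ℝ) < 1 + (t - T) ^ 2 := by nlinarith [sq_nonneg (t - T)]
  have key : (1 + (t - T) ^ 2) ^ β = (1 + (t - T) ^ 2) ^ (β - 1) * (1 + (t - T) ^ 2) := by
    rw [← Real.rpow_add_one hbpos.ne' (β - 1)]; norm_num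
  rw [key]
  apply mul_le_mul_of_nonneg_left _ (Real.rpow_nonneg hbpos.le _)
  nlinarith

lemma cq_cs (T : ℝ) {e0 e2 : ℝ} (h0 : e0 ≤ -1) (h2 : e2 ≤ -1) :
    (∫ t in Set.Ioi (0:ℝ), (1 + (t - T) ^ 2) ^ ((e0 + e2) / 2)) ^ 2
      ≤ (∫ t in Set.Ioi (0:ℝ), (1 + (t - T) ^ 2) ^ e0)
        * (∫ t in Set.Ioi (0:ℝ), (1 + (t - T) ^ 2) ^ e2) := by
  have hmid : (e0 + e2) / 2 ≤ -1 := by linarith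
  set A := ∫ t in Set.Ioi (0:ℝ), (1 + (t - T) ^ 2) ^ e0 with hA
  set C := ∫ t in Set.Ioi (0:ℝ), (1 + (t - T) ^ 2) ^ e2 with hC
  set M := ∫ t in Set.Ioi (0:ℝ), (1 + (t - T) ^ 2) ^ ((e0 + e2) / 2) with hM
  have hCpos : 0 < C := cq_pos T h2
  set l := M / C with hl
  have hnn : 0 ≤ ∫ t in Set.Ioi (0:ℝ),
      ((1 + (t - T) ^ 2) ^ e0 + (-(2 * l)) * (1 + (t - T) ^ 2) ^ ((e0 + e2) / 2)
        + l ^ 2 * (1 + (t - T) ^ 2) ^ e2) := by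
    apply setIntegral_nonneg measurableSet_Ioi
    intro t _
    have hb : (0:ℝ) < 1 + (t - T) ^ 2 := by nlinarith [sq_nonneg (t - T)]
    have h1 : (1 + (t - T) ^ 2) ^ (e0 / 2) * (1 + (t - T) ^ 2) ^ (e0 / 2)
        = (1 + (t - T) ^ 2) ^ e0 := by
      rw [← Real.rpow_add hb, add_halves]
    have h2' : (1 + (t - T) ^ 2) ^ (e2 / 2) * (1 + (t - T) ^ 2) ^ (e2 / 2)
        = (1 + (t - T) ^ 2) ^ e2 := by
      rw [← Real.rpow_add hb, add_halves]
    have h3 : (1 + (t - T) ^ 2) ^ (e0 / 2) * (1 + (t - T) ^ 2) ^ (e2 / 2)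
        = (1 + (t - T) ^ 2) ^ ((e0 + e2) / 2) := by
      rw [← Real.rpow_add hb]; congr 1; ring
    have expand : (1 + (t - T) ^ 2) ^ e0 + (-(2 * l)) * (1 + (t - T) ^ 2) ^ ((e0 + e2) / 2)
        + l ^ 2 * (1 + (t - T) ^ 2) ^ e2
        = ((1 + (t - T) ^ 2) ^ (e0 / 2) - l * (1 + (t - T) ^ 2) ^ (e2 / 2)) ^ 2 := by
      rw [← h1, ← h2', ← h3]; ring
    rw [expand]
    exact sq_nonneg _
  have hsplit : (∫ t in Set.Ioi (0:ℝ),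
      ((1 + (t - T) ^ 2) ^ e0 + (-(2 * l)) * (1 + (t - T) ^ 2) ^ ((e0 + e2) / 2)
        + l ^ 2 * (1 + (t - T) ^ 2) ^ e2)) = A - 2 * l * M + l ^ 2 * C := by
    have hi0 : IntegrableOn (fun t : ℝ => (1 + (t - T) ^ 2) ^ e0) (Set.Ioi 0) :=
      cq_integrable T h0
    have him : IntegrableOn
        (fun t : ℝ => (-(2 * l)) * (1 + (t - T) ^ 2) ^ ((e0 + e2) / 2)) (Set.Ioi 0) :=
      (cq_integrable T hmid).const_mul _
    have hi2 : IntegrableOn (fun t : ℝ => l ^ 2 * (1 + (t - T) ^ 2) ^ e2) (Set.Ioi 0) :=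
      (cq_integrable T h2).const_mul _
    have hsum : IntegrableOn (fun t : ℝ => (1 + (t - T) ^ 2) ^ e0
        + (-(2 * l)) * (1 + (t - T) ^ 2) ^ ((e0 + e2) / 2)) (Set.Ioi 0) := hi0.add him
    rw [integral_add hsum hi2, integral_add hi0 him, integral_const_mul, integral_const_mul]
    ring
  rw [hsplit] at hnn
  have hkey : A - 2 * l * M + l ^ 2 * C = A - M ^ 2 / C := by
    rw [hl]
    field_simp
    ring
  rw [hkey] at hnn
  have : M ^ 2 / C ≤ A := by linarith
  calc M ^ 2 = M ^ 2 / C * C := by field_simp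
    _ ≤ A * C := by
        apply mul_le_mul_of_nonneg_right this hCpos.le

lemma pos_poly1 (s m : ℝ) (hs : 0 ≤ s) (hm : 0 ≤ m) :
    0 ≤ 50880 + 6700*m + 288*m^2 + 4*m^3 + 12608*s + 1650*s*m + 71*s*m^2 + s*m^3
      + 420*s^2 + 41*s^2*m + s^2*m^2 := by positivity

lemma pos_poly2 (s m : ℝ) (hs : 0 ≤ s) (hm : 0 ≤ m) :
    0 ≤ 12219008400 + 5190922560*m + 980083132*m^2 + 107030724*m^3 + 7368465*m^4
      + 326452*m^5 + 9066*m^6 + 144*m^7 + m^8 + 694566960*s + 177111608*s*m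
      + 18063344*s*m^2 + 921288*s*m^3 + 23504*s*m^4 + 240*s*m^5 + 120566720*s^2
      + 30220864*s^2*m + 3027430*s^2*m^2 + 151570*s^2*m^3 + 3794*s^2*m^4 + 38*s^2*m^5
      + 8112468*s^3 + 1955218*s^3*m + 187480*s^3*m^2 + 8940*s^3*m^3 + 212*s^3*m^4
      + 2*s^3*m^5 + 142443*s^4 + 29442*s^4*m + 2276*s^4*m^2 + 78*s^4*m^3 + s^4*m^4 := by
  positivity

set_option maxHeartbeats 1000000 in
lemma cq_algebra (ν x c0 c1 c2 Jv Kv B B5 B3 : ℝ)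
    (hν : (25:ℝ) ≤ ν) (hx : 0 < x)
    (hc0 : 0 < c0) (hc1 : 0 < c1) (hc2 : 0 < c2) (hJ : 0 < Jv) (hK : 0 < Kv)
    (hB : 0 < B) (hB5u : B5 * (1 + x) = B) (hB3u : B3 * (1 + x) = B5)
    (e1 : (ν - 7) * c0 = (ν - 8) * c1 - B)
    (e2 : (ν - 10) * c2 = (ν - 9) * c1 + (1 + x) * B)
    (e3 : (ν - 5) * Jv = (ν - 6) * c0 - B5)
    (e4 : (ν - 3) * Kv = (ν - 4) * Jv - B3)
    (e5 : Kv * (1 + x) ≤ Jv)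
    (hcs : c1 ^ 2 ≤ c0 * c2) :
    (ν - 10) * (ν - 7) / (ν - 8) ^ 2 ≤ c1 ^ 2 / (c0 * c2) ∧
    c1 ^ 2 / (c0 * c2) ≤ (ν - 6) * (ν - 10) / ((ν - 8) * (ν - 9)) := by
  have h8 : (0:ℝ) < ν - 8 := by linarith
  have h9 : (0:ℝ) < ν - 9 := by linarith
  have hc0c2 : 0 < c0 * c2 := mul_pos hc0 hc2
  constructor
  · -- lower bound
    have hG : 0 ≤ (ν - 8) * c1 ^ 2 - (1 + (ν - 8) * x) * B * c1 + (1 + x) * B ^ 2 := by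
      rcases le_or_gt ((1 + (ν - 8) * x) ^ 2) (4 * (ν - 8) * (1 + x)) with hcase | hcase
      · nlinarith [sq_nonneg (2 * (ν - 8) * c1 - (1 + (ν - 8) * x) * B),
          mul_nonneg (sub_nonneg.2 hcase) (sq_nonneg B), h8]
      · have hp : (0:ℝ) < 1 + (ν - 8) * x := by nlinarith
        have hp2 : (68:ℝ) ≤ (1 + (ν - 8) * x) ^ 2 := by nlinarith
        have s1 : (7:ℝ) < (ν - 8) * x := by nlinarith [hp, hp2]
        have hs : (0:ℝ) ≤ (ν - 8) * x - 7 := by linarith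
        have hm : (0:ℝ) ≤ ν - 25 := by linarith
        have hy : (0:ℝ) < (ν - 4) * x - 1 := by nlinarith
        have e4u : ((ν - 3) * Kv) * (1 + x) = ((ν - 4) * Jv - B3) * (1 + x) := by rw [e4]
        have hmul : (ν - 3) * (Kv * (1 + x)) ≤ (ν - 3) * Jv :=
          mul_le_mul_of_nonneg_left e5 (by linarith)
        have s3 : Jv * ((ν - 4) * x - 1) ≤ B5 := by nlinarith [e4u, hmul, hB3u]
        have e3y : ((ν - 5) * Jv) * ((ν - 4) * x - 1)
            = ((ν - 6) * c0 - B5) * ((ν - 4) * x - 1) := by rw [e3]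
        have hmul2 : (ν - 5) * (Jv * ((ν - 4) * x - 1)) ≤ (ν - 5) * B5 :=
          mul_le_mul_of_nonneg_left s3 (by linarith)
        have s4' : (ν - 6) * c0 * ((ν - 4) * x - 1)
            ≤ B5 * (((ν - 4) * x - 1) + (ν - 5)) := by nlinarith [e3y, hmul2]
        have hmul3 := mul_le_mul_of_nonneg_right s4' (by positivity : (0:ℝ) ≤ 1 + x)
        have hB5uD : B5 * (((ν - 4) * x - 1) + (ν - 5)) * (1 + x)
            = B * (((ν - 4) * x - 1) + (ν - 5)) := by
          linear_combination (((ν - 4) * x - 1) + (ν - 5)) * hB5u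
        have s4 : (ν - 6) * c0 * ((ν - 4) * x - 1) * (1 + x)
            ≤ B * (((ν - 4) * x - 1) + (ν - 5)) := by linarith [hmul3, hB5uD]
        have hP1s := pos_poly1 ((ν - 8) * x - 7) (ν - 25) hs hm
        have hP1 : 0 ≤ 2 * (ν - 8) * ((ν - 6) * (1 + x) * ((ν - 4) * x - 1))
            - (ν - 7) * (1 + (ν - 8) * x) * (((ν - 4) * x - 1) + (ν - 5)) := by
          have hsc : 0 ≤ (2 * (ν - 8) * ((ν - 6) * (1 + x) * ((ν - 4) * x - 1))
              - (ν - 7) * (1 + (ν - 8) * x) * (((ν - 4) * x - 1) + (ν - 5))) * (ν - 8) := by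
            linarith [hP1s]
          exact (mul_nonneg_iff_of_pos_right h8).mp hsc
        have hP2s := pos_poly2 ((ν - 8) * x - 7) (ν - 25) hs hm
        have hP2 : 0 ≤ (ν - 8) * ((ν - 6) * (1 + x) * ((ν - 4) * x - 1)) ^ 2
            - (ν - 7) * (1 + (ν - 8) * x) * ((ν - 6) * (1 + x) * ((ν - 4) * x - 1))
              * (((ν - 4) * x - 1) + (ν - 5))
            + (ν - 7) ^ 2 * (((ν - 4) * x - 1) + (ν - 5)) ^ 2 := by
          have hsc : 0 ≤ ((ν - 8) * ((ν - 6) * (1 + x) * ((ν - 4) * x - 1)) ^ 2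
              - (ν - 7) * (1 + (ν - 8) * x) * ((ν - 6) * (1 + x) * ((ν - 4) * x - 1))
                * (((ν - 4) * x - 1) + (ν - 5))
              + (ν - 7) ^ 2 * (((ν - 4) * x - 1) + (ν - 5)) ^ 2) * (ν - 8) ^ 4 := by
            linarith [hP2s]
          exact (mul_nonneg_iff_of_pos_right (pow_pos h8 4)).mp hsc
        have hD : (0:ℝ) < ((ν - 4) * x - 1) + (ν - 5) := by linarith
        have hF : 0 ≤ (ν - 8) * B ^ 2 - (ν - 7) * (1 + (ν - 8) * x) * c0 * B
            + (ν - 7) ^ 2 * c0 ^ 2 := by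
          have t1 := mul_nonneg h8.le (sq_nonneg (B * (((ν - 4) * x - 1) + (ν - 5))
              - c0 * ((ν - 6) * (1 + x) * ((ν - 4) * x - 1))))
          have t2 := mul_nonneg (mul_nonneg hc0.le hc0.le) hP2
          have t3 := mul_nonneg hc0.le (mul_nonneg (sub_nonneg.2 s4) hP1)
          have hsc : 0 ≤ ((ν - 8) * B ^ 2 - (ν - 7) * (1 + (ν - 8) * x) * c0 * B
              + (ν - 7) ^ 2 * c0 ^ 2) * ((((ν - 4) * x - 1) + (ν - 5)) ^ 2) := by
            linarith [t1, t2, t3]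
          exact (mul_nonneg_iff_of_pos_right (pow_pos hD 2)).mp hsc
        have he1' : (ν - 8) * c1 = (ν - 7) * c0 + B := by linarith [e1]
        have key : (ν - 8) * ((ν - 8) * c1 ^ 2 - (1 + (ν - 8) * x) * B * c1 + (1 + x) * B ^ 2)
            = ((ν - 8) * B ^ 2 - (ν - 7) * (1 + (ν - 8) * x) * c0 * B + (ν - 7) ^ 2 * c0 ^ 2)
              + 2 * (ν - 7) * c0 * B := by
          linear_combination ((ν - 8) * c1 + (ν - 7) * c0 + B - (1 + (ν - 8) * x) * B) * he1'
        have hsc : 0 ≤ (ν - 8) * ((ν - 8) * c1 ^ 2 - (1 + (ν - 8) * x) * B * c1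
            + (1 + x) * B ^ 2) := by
          linarith [key, hF,
            mul_nonneg (mul_nonneg (show (0:ℝ) ≤ ν - 7 by linarith) hc0.le) hB.le]
        exact (mul_nonneg_iff_of_pos_left h8).mp hsc
    have hprod : (ν - 7) * (ν - 10) * (c0 * c2)
        = ((ν - 8) * c1 - B) * ((ν - 9) * c1 + (1 + x) * B) := by
      linear_combination ((ν - 10) * c2) * e1 + ((ν - 8) * c1 - B) * e2
    rw [div_le_div_iff₀ (by positivity) hc0c2]
    linarith [hG, hprod]
  · -- upper bound
    rw [div_le_div_iff₀ hc0c2 (by positivity : (0:ℝ) < (ν - 8) * (ν - 9))]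
    linarith [mul_le_mul_of_nonneg_right hcs (mul_pos h8 h9).le,
      mul_nonneg hc0c2.le (show (0:ℝ) ≤ ν - 12 by linarith)]

set_option maxHeartbeats 1000000 in
/-- For `T < 0` and `n ≥ 25`, with
`c_q = ∫_0^∞ (1+(t−T)²)^{(5+2q−n)/2} dt` (`q = 0,1,2`), one has
`(n−10)(n−7)/(n−8)² ≤ c₁²/(c₀c₂) ≤ (n−6)(n−10)/((n−8)(n−9))`. -/
theorem cq_quotient_bounds (T : ℝ) (hT : T < 0) (n : ℕ) (hn : 25 ≤ n)
    (c : ℕ → ℝ)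
    (hc : ∀ m : ℕ, c m
      = ∫ t in Set.Ioi (0 : ℝ), (1 + (t - T) ^ 2) ^ ((5 + 2 * (m : ℝ) - (n : ℝ)) / 2)) :
    ((n : ℝ) - 10) * ((n : ℝ) - 7) / ((n : ℝ) - 8) ^ 2 ≤ c 1 ^ 2 / (c 0 * c 2) ∧
    c 1 ^ 2 / (c 0 * c 2) ≤ ((n : ℝ) - 6) * ((n : ℝ) - 10) / (((n : ℝ) - 8) * ((n : ℝ) - 9)) := by
  have hν : (25:ℝ) ≤ (n:ℝ) := by exact_mod_cast hn
  set ν : ℝ := (n : ℝ) with hν'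
  have hβ0 : (5 - ν) / 2 ≤ -1 := by linarith
  have hβ1 : (7 - ν) / 2 ≤ -1 := by linarith
  have hβ2 : (9 - ν) / 2 ≤ -1 := by linarith
  have hβ3 : (3 - ν) / 2 ≤ -1 := by linarith
  have hβ5 : (1 - ν) / 2 ≤ -1 := by linarith
  have hc0 : c 0 = ∫ t in Set.Ioi (0:ℝ), (1 + (t - T) ^ 2) ^ ((5 - ν) / 2) := by
    rw [hc 0]; norm_num
  have hc1 : c 1 = ∫ t in Set.Ioi (0:ℝ), (1 + (t - T) ^ 2) ^ ((7 - ν) / 2) := by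
    rw [hc 1]; norm_num
  have hc2 : c 2 = ∫ t in Set.Ioi (0:ℝ), (1 + (t - T) ^ 2) ^ ((9 - ν) / 2) := by
    rw [hc 2]; norm_num
  have hc0pos : 0 < c 0 := by rw [hc0]; exact cq_pos T hβ0
  have hc1pos : 0 < c 1 := by rw [hc1]; exact cq_pos T hβ1
  have hc2pos : 0 < c 2 := by rw [hc2]; exact cq_pos T hβ2
  have hJpos : 0 < ∫ t in Set.Ioi (0:ℝ), (1 + (t - T) ^ 2) ^ ((3 - ν) / 2) := cq_pos T hβ3
  have hKpos : 0 < ∫ t in Set.Ioi (0:ℝ), (1 + (t - T) ^ 2) ^ ((1 - ν) / 2) := cq_pos T hβ5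
  have hupos : (0:ℝ) < 1 + T ^ 2 := by positivity
  have hxpos : (0:ℝ) < T ^ 2 := by nlinarith
  have hBpos : 0 < -T * (1 + T ^ 2) ^ ((7 - ν) / 2) :=
    mul_pos (by linarith) (Real.rpow_pos_of_pos hupos _)
  have hB5u : (-T * (1 + T ^ 2) ^ ((5 - ν) / 2)) * (1 + T ^ 2)
      = -T * (1 + T ^ 2) ^ ((7 - ν) / 2) := by
    have h : (1 + T ^ 2) ^ ((7 - ν) / 2) = (1 + T ^ 2) ^ ((5 - ν) / 2) * (1 + T ^ 2) := by
      rw [← Real.rpow_add_one hupos.ne' ((5 - ν)/2)]; congr 1; ring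
    rw [h]; ring
  have hB3u : (-T * (1 + T ^ 2) ^ ((3 - ν) / 2)) * (1 + T ^ 2)
      = -T * (1 + T ^ 2) ^ ((5 - ν) / 2) := by
    have h : (1 + T ^ 2) ^ ((5 - ν) / 2) = (1 + T ^ 2) ^ ((3 - ν) / 2) * (1 + T ^ 2) := by
      rw [← Real.rpow_add_one hupos.ne' ((3 - ν)/2)]; congr 1; ring
    rw [h]; ring
  have hibp1 := cq_ibp T hT hβ1
  rw [show (7 - ν) / 2 - 1 = (5 - ν) / 2 by ring, ← hc0, ← hc1] at hibp1
  have e1 : (ν - 7) * c 0 = (ν - 8) * c 1 - -T * (1 + T ^ 2) ^ ((7 - ν) / 2) := by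
    linear_combination hibp1
  have hibp2 := cq_ibp T hT hβ2
  rw [show (9 - ν) / 2 - 1 = (7 - ν) / 2 by ring, ← hc1, ← hc2] at hibp2
  have hu9 : (1 + T ^ 2) ^ ((9 - ν) / 2) = (1 + T ^ 2) ^ ((7 - ν) / 2) * (1 + T ^ 2) := by
    rw [← Real.rpow_add_one hupos.ne' ((7 - ν)/2)]; congr 1; ring
  rw [hu9] at hibp2
  have e2 : (ν - 10) * c 2 = (ν - 9) * c 1
      + (1 + T ^ 2) * (-T * (1 + T ^ 2) ^ ((7 - ν) / 2)) := by
    linear_combination -hibp2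
  have hibp3 := cq_ibp T hT hβ0
  rw [show (5 - ν) / 2 - 1 = (3 - ν) / 2 by ring, ← hc0] at hibp3
  have e3 : (ν - 5) * (∫ t in Set.Ioi (0:ℝ), (1 + (t - T) ^ 2) ^ ((3 - ν) / 2))
      = (ν - 6) * c 0 - -T * (1 + T ^ 2) ^ ((5 - ν) / 2) := by
    linear_combination hibp3
  have hibp4 := cq_ibp T hT hβ3
  rw [show (3 - ν) / 2 - 1 = (1 - ν) / 2 by ring] at hibp4
  have e4 : (ν - 3) * (∫ t in Set.Ioi (0:ℝ), (1 + (t - T) ^ 2) ^ ((1 - ν) / 2))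
      = (ν - 4) * (∫ t in Set.Ioi (0:ℝ), (1 + (t - T) ^ 2) ^ ((3 - ν) / 2))
        - -T * (1 + T ^ 2) ^ ((3 - ν) / 2) := by
    linear_combination hibp4
  have e5 : (∫ t in Set.Ioi (0:ℝ), (1 + (t - T) ^ 2) ^ ((1 - ν) / 2)) * (1 + T ^ 2)
      ≤ ∫ t in Set.Ioi (0:ℝ), (1 + (t - T) ^ 2) ^ ((3 - ν) / 2) := by
    have h := cq_compare T hT hβ3
    rw [show (3 - ν) / 2 - 1 = (1 - ν) / 2 by ring] at h
    exact h
  have hcs : c 1 ^ 2 ≤ c 0 * c 2 := by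
    have h := cq_cs T hβ0 hβ2
    rw [show ((5 - ν) / 2 + (9 - ν) / 2) / 2 = (7 - ν) / 2 by ring] at h
    rw [hc0, hc1, hc2]
    exact h
  exact cq_algebra ν (T ^ 2) (c 0) (c 1) (c 2) _ _ _ _ _ hν hxpos hc0pos hc1pos hc2pos
    hJpos hKpos hBpos hB5u hB3u e1 e2 e3 e4 e5 hcs
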